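/- Let p = 1.409. It is impossible to have 12 distinct points in the annulus {P : p ≤ |P| ≤ 1 + p} in the plane such that any two of them are at distance at least p from each other. -/

import Mathlib

lemma sqrt3_gt : (1.732:ℝ) < Real.sqrt 3 := by
  have h := Real.sq_sqrt (by norm_num : (0:ℝ) ≤ 3)
  nlinarith [Real.sqrt_nonneg 3]

lemma key_ineq {r s : ℝ} (hr1 : 1.409 ≤ r) (hr2 : r ≤ 2.409)
    (hs1 : 1.409 ≤ s) (hs2 : s ≤ 2.409) :
    r^2 + s^2 - Real.sqrt 3 * (r*s) < 1.409^2 := by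
  have h3 := sqrt3_gt
  nlinarith [mul_nonneg (sub_nonneg.2 hr1) (sub_nonneg.2 hs1),
    mul_nonneg (sub_nonneg.2 hr2) (sub_nonneg.2 hs2),
    mul_nonneg (sub_nonneg.2 hr1) (sub_nonneg.2 hs2),
    mul_nonneg (sub_nonneg.2 hr2) (sub_nonneg.2 hs1),
    mul_pos (show (0:ℝ) < r by linarith) (show (0:ℝ) < s by linarith)]

lemma cos_arg_lt {z w : ℂ} (hz1 : 1.409 ≤ ‖z‖) (hz2 : ‖z‖ ≤ 2.409)
    (hw1 : 1.409 ≤ ‖w‖) (hw2 : ‖w‖ ≤ 2.409)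
    (hd : 1.409 ≤ ‖z - w‖) :
    Real.cos (z.arg - w.arg) < Real.sqrt 3 / 2 := by
  have hz0 : z ≠ 0 := by
    intro h; rw [h] at hz1; simp at hz1; linarith
  have hw0 : w ≠ 0 := by
    intro h; rw [h] at hw1; simp at hw1; linarith
  set R := ‖z‖ with hR
  set S := ‖w‖ with hS
  have hRpos : 0 < R := by linarith
  have hSpos : 0 < S := by linarith
  have hRsq : R^2 = z.re^2 + z.im^2 := by
    rw [hR, Complex.sq_norm, Complex.normSq_apply]; ring
  have hSsq : S^2 = w.re^2 + w.im^2 := by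
    rw [hS, Complex.sq_norm, Complex.normSq_apply]; ring
  have hdsq : 1.409^2 ≤ (z.re - w.re)^2 + (z.im - w.im)^2 := by
    have : 1.409^2 ≤ ‖z-w‖^2 := by
      nlinarith [norm_nonneg (z-w)]
    rwa [Complex.sq_norm, Complex.normSq_apply, Complex.sub_re, Complex.sub_im,
      ← pow_two, ← pow_two] at this
  have hkey := key_ineq hz1 hz2 hw1 hw2
  rw [Real.cos_sub, Complex.cos_arg hz0, Complex.sin_arg, Complex.cos_arg hw0,
    Complex.sin_arg, ← hR, ← hS]
  rw [div_mul_div_comm, div_mul_div_comm, ← add_div, div_lt_iff₀ (by positivity)]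
  nlinarith [Real.sqrt_nonneg 3, mul_pos hRpos hSpos]

lemma cos_big {d : ℝ} (h0 : 0 ≤ d) (h1 : d ≤ Real.pi/6) : Real.sqrt 3 / 2 ≤ Real.cos d := by
  rw [← Real.cos_pi_div_six]
  exact Real.cos_le_cos_of_nonneg_of_le_pi h0 (by linarith [Real.pi_pos]) h1

lemma cos_big' {d : ℝ} (h0 : 11*Real.pi/6 ≤ d) (h1 : d ≤ 2*Real.pi) :
    Real.sqrt 3 / 2 ≤ Real.cos d := by
  have : Real.cos d = Real.cos (2*Real.pi - d) := by
    rw [Real.cos_sub, Real.cos_two_pi, Real.sin_two_pi]; ring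
  rw [this]; exact cos_big (by linarith) (by linarith)

lemma circular (θ : Fin 12 → ℝ) (hrange : ∀ i, θ i ∈ Set.Ioc (-Real.pi) Real.pi)
    (hcos : ∀ i j, i ≠ j → Real.cos (θ i - θ j) < Real.sqrt 3 / 2) : False := by
  have pi_pos := Real.pi_pos
  have hone : ¬ ((1:ℝ) < Real.sqrt 3 / 2) := fun h => by
    nlinarith [Real.sq_sqrt (show (0:ℝ) ≤ 3 by norm_num), Real.sqrt_nonneg 3]
  have hinj : Function.Injective θ := by
    intro i j h
    by_contra hne
    have := hcos i j hne
    rw [h, sub_self, Real.cos_zero] at this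
    exact hone this
  set s : Finset ℝ := Finset.image θ Finset.univ with hsdef
  have hs : s.card = 12 := by
    rw [hsdef, Finset.card_image_of_injective _ hinj, Finset.card_univ, Fintype.card_fin]
  set e := s.orderIsoOfFin hs with he
  set a : Fin 12 → ℝ := fun k => (e k : ℝ) with ha
  have hmono : StrictMono a := fun k l h => e.strictMono h
  have hmem : ∀ k, ∃ i, θ i = a k := by
    intro k
    have : (a k) ∈ s := (e k).2
    rw [hsdef, Finset.mem_image] at this
    obtain ⟨i, _, hi⟩ := this
    exact ⟨i, hi⟩
  have hcos' : ∀ k l : Fin 12, k < l → Real.cos (a l - a k) < Real.sqrt 3 / 2 := by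
    intro k l hkl
    obtain ⟨i, hi⟩ := hmem k
    obtain ⟨j, hj⟩ := hmem l
    have hne : j ≠ i := by
      intro h; rw [h, hi] at hj
      exact absurd hj (ne_of_lt (hmono hkl))
    rw [← hi, ← hj]
    exact hcos j i hne
  have gap : ∀ k l : Fin 12, k < l → Real.pi/6 < a l - a k := by
    intro k l hkl
    by_contra hle
    push_neg at hle
    exact absurd (hcos' k l hkl) (not_lt.2 (cos_big (le_of_lt (sub_pos.2 (hmono hkl))) hle))
  have hub : ∀ k, a k ≤ Real.pi := by
    intro k; obtain ⟨i, hi⟩ := hmem k; rw [← hi]; exact (hrange i).2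
  have hlb : ∀ k, -Real.pi < a k := by
    intro k; obtain ⟨i, hi⟩ := hmem k; rw [← hi]; exact (hrange i).1
  have wrap : a 11 - a 0 < 11*Real.pi/6 := by
    by_contra hge
    push_neg at hge
    have h2 : a 11 - a 0 < 2*Real.pi := by
      have := hub 11; have := hlb 0; linarith
    exact absurd (hcos' 0 11 (by decide)) (not_lt.2 (cos_big' hge (le_of_lt h2)))
  have g0 := gap 0 1 (by decide)
  have g1 := gap 1 2 (by decide)
  have g2 := gap 2 3 (by decide)
  have g3 := gap 3 4 (by decide)
  have g4 := gap 4 5 (by decide)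
  have g5 := gap 5 6 (by decide)
  have g6 := gap 6 7 (by decide)
  have g7 := gap 7 8 (by decide)
  have g8 := gap 8 9 (by decide)
  have g9 := gap 9 10 (by decide)
  have g10 := gap 10 11 (by decide)
  linarith

/-- No 12 points of weight 1 in the annulus p ≤ ρ ≤ 1+p, with p = 1.409. -/
theorem stmt_3 :
    ¬ ∃ X : Fin 12 → EuclideanSpace ℝ (Fin 2),
      Function.Injective X ∧
      (∀ i, (1.409 : ℝ) ≤ ‖X i‖ ∧ ‖X i‖ ≤ 1 + 1.409) ∧
      (∀ i j, i ≠ j → (1.409 : ℝ) ≤ dist (X i) (X j)) := by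
  rintro ⟨X, -, hnorm, hdist⟩
  set z : Fin 12 → ℂ := fun i => ⟨X i 0, X i 1⟩ with hz
  have habs : ∀ i, ‖z i‖ = ‖X i‖ := by
    intro i
    rw [Complex.norm_def, Complex.normSq_apply, EuclideanSpace.norm_eq]
    simp [hz, Fin.sum_univ_two, Real.norm_eq_abs, sq_abs]
    ring_nf
  have habsd : ∀ i j, dist (X i) (X j) = ‖z i - z j‖ := by
    intro i j
    rw [EuclideanSpace.dist_eq, Complex.norm_def, Complex.normSq_apply,
      Complex.sub_re, Complex.sub_im]
    simp [hz, Fin.sum_univ_two, Real.dist_eq, sq_abs]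
    ring_nf
  apply circular (fun i => (z i).arg)
  · intro i
    exact Complex.arg_mem_Ioc (z i)
  · intro i j hij
    have h24 : (1:ℝ) + 1.409 = 2.409 := by norm_num
    refine cos_arg_lt ?_ ?_ ?_ ?_ ?_
    · rw [habs]; exact (hnorm i).1
    · rw [habs]; have := (hnorm i).2; linarith
    · rw [habs]; exact (hnorm j).1
    · rw [habs]; have := (hnorm j).2; linarith
    · rw [← habsd]; exact hdist i j hij
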